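/- Let K be a compact convex subset of the closed unit ball B_d ⊆ ℝ^d such that B_d is the minimum volume ellipsoid containing K. If K' = a + T·K is an affine image of K (T an invertible linear map, a ∈ ℝ^d) contained in B_d, then vol(K') ≤ vol(K); moreover if vol(K') = vol(K) then T is a scalar multiple of an orthogonal transformation with |det T| = 1, i.e., the affine map is an isometry. -/

import Mathlib

open MeasureTheory Metric Set
open scoped RealInnerProductSpace ENNReal

noncomputable def diagEquiv {d : ℕ} (c : Fin d → ℝ) (hc : ∀ i, c i ≠ 0) :
    EuclideanSpace ℝ (Fin d) ≃ₗ[ℝ] EuclideanSpace ℝ (Fin d) where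
  toFun x := WithLp.toLp 2 (fun i => c i * x i)
  invFun x := WithLp.toLp 2 (fun i => x i / c i)
  map_add' x y := by ext i; simp [mul_add]
  map_smul' r x := by ext i; simp; ring
  left_inv x := by ext i; exact mul_div_cancel_left₀ _ (hc i)
  right_inv x := by ext i; exact mul_div_cancel₀ _ (hc i)

lemma diagEquiv_det {d : ℕ} (c : Fin d → ℝ) (hc : ∀ i, c i ≠ 0) :
    LinearMap.det (diagEquiv c hc).toLinearMap = ∏ i, c i := by
  classical
  let B := (EuclideanSpace.basisFun (Fin d) ℝ).toBasis
  rw [← LinearMap.det_toMatrix B]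
  have : LinearMap.toMatrix B B (diagEquiv c hc).toLinearMap = Matrix.diagonal c := by
    ext i j
    simp [LinearMap.toMatrix_apply, B, diagEquiv, Matrix.diagonal_apply,
      EuclideanSpace.basisFun_repr, EuclideanSpace.basisFun_apply, EuclideanSpace.single_apply]
  rw [this, Matrix.det_diagonal]

lemma vol_affine_image (d : ℕ) (a : EuclideanSpace ℝ (Fin d))
    (f : EuclideanSpace ℝ (Fin d) →ₗ[ℝ] EuclideanSpace ℝ (Fin d)) (s : Set (EuclideanSpace ℝ (Fin d))) :
    volume ((fun x => a + f x) '' s) = ENNReal.ofReal |LinearMap.det f| * volume s := by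
  have h1 : (fun x => a + f x) '' s = (fun y => a + y) '' (f '' s) := by
    rw [Set.image_image]
  rw [h1, Set.image_add_left, measure_preimage_add, Measure.addHaar_image_linearMap]

set_option maxHeartbeats 2000000

/-- Let K be a compact convex subset of B_d with nonempty interior such that
B_d is the minimum volume ellipsoid containing K.  If K' = a + T·K ⊆ B_d is an affine
image of K then vol(K') ≤ vol(K), and if vol(K') = vol(K) then the affine map x ↦ a + T x
is an isometry. -/
theorem stmt6 (d : ℕ) (K : Set (EuclideanSpace ℝ (Fin d)))
    (hKc : IsCompact K) (hconv : Convex ℝ K) (hint : (interior K).Nonempty)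
    (hKB : K ⊆ closedBall (0 : EuclideanSpace ℝ (Fin d)) 1)
    (hmin : ∀ (b : EuclideanSpace ℝ (Fin d))
      (S : EuclideanSpace ℝ (Fin d) ≃ₗ[ℝ] EuclideanSpace ℝ (Fin d)),
      K ⊆ (fun x => b + S x) '' closedBall (0 : EuclideanSpace ℝ (Fin d)) 1 →
      volume (closedBall (0 : EuclideanSpace ℝ (Fin d)) 1) ≤
        volume ((fun x => b + S x) '' closedBall (0 : EuclideanSpace ℝ (Fin d)) 1))
    (a : EuclideanSpace ℝ (Fin d))
    (T : EuclideanSpace ℝ (Fin d) ≃ₗ[ℝ] EuclideanSpace ℝ (Fin d))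
    (hK' : (fun x => a + T x) '' K ⊆ closedBall (0 : EuclideanSpace ℝ (Fin d)) 1) :
    volume ((fun x => a + T x) '' K) ≤ volume K ∧
      (volume ((fun x => a + T x) '' K) = volume K →
        Isometry (fun x : EuclideanSpace ℝ (Fin d) => a + T x)) := by
  classical
  set L : EuclideanSpace ℝ (Fin d) →ₗ[ℝ] EuclideanSpace ℝ (Fin d) := T.toLinearMap with hL
  -- basic volume facts
  have hvB_pos : 0 < volume (closedBall (0 : EuclideanSpace ℝ (Fin d)) 1) := measure_closedBall_pos volume 0 one_pos
  have hvB_lt : volume (closedBall (0 : EuclideanSpace ℝ (Fin d)) 1) < ⊤ := measure_closedBall_lt_top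
  -- key consequence of minimality
  have key : ∀ (c : EuclideanSpace ℝ (Fin d)) (S : EuclideanSpace ℝ (Fin d) ≃ₗ[ℝ] EuclideanSpace ℝ (Fin d)),
      K ⊆ (fun x => c + S x) '' closedBall (0 : EuclideanSpace ℝ (Fin d)) 1 →
      1 ≤ |LinearMap.det S.toLinearMap| := by
    intro c S hsub
    have h := hmin c S hsub
    have hEq : (fun x => c + S x) = (fun x => c + S.toLinearMap x) := rfl
    rw [hEq, vol_affine_image] at h
    have h1 : (1 : ℝ≥0∞) * volume (closedBall (0 : EuclideanSpace ℝ (Fin d)) 1) ≤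
        ENNReal.ofReal |LinearMap.det S.toLinearMap| * volume (closedBall (0 : EuclideanSpace ℝ (Fin d)) 1) := by
      rwa [one_mul]
    have h2 : (1 : ℝ≥0∞) ≤ ENNReal.ofReal |LinearMap.det S.toLinearMap| :=
      (ENNReal.mul_le_mul_iff_left hvB_pos.ne' hvB_lt.ne).mp h1
    exact ENNReal.one_le_ofReal.mp h2
  -- |det T| ≤ 1
  have hdet_inv : LinearMap.det T.symm.toLinearMap * LinearMap.det L = 1 := by
    rw [← LinearMap.det_comp]
    have : T.symm.toLinearMap ∘ₗ L = LinearMap.id := by ext x; simp [hL]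
    rw [this, LinearMap.det_id]
  have hdetL_ne : LinearMap.det L ≠ 0 := by
    intro h; rw [h, mul_zero] at hdet_inv; exact one_ne_zero hdet_inv.symm
  have hsub1 : K ⊆ (fun x => (-(T.symm a)) + T.symm x) '' closedBall (0 : EuclideanSpace ℝ (Fin d)) 1 := by
    intro x hx
    refine ⟨a + T x, hK' ⟨x, hx, rfl⟩, ?_⟩
    simp
  have hinv_ge : 1 ≤ |LinearMap.det T.symm.toLinearMap| := key _ T.symm hsub1
  have hdet_le : |LinearMap.det L| ≤ 1 := by
    have h := abs_mul (LinearMap.det T.symm.toLinearMap) (LinearMap.det L)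
    rw [hdet_inv, abs_one] at h
    nlinarith [abs_nonneg (LinearMap.det L)]
  have hvolK' : volume ((fun x => a + T x) '' K)
      = ENNReal.ofReal |LinearMap.det L| * volume K := by
    have hEq : (fun x => a + T x) = (fun x => a + L x) := rfl
    rw [hEq, vol_affine_image]
  constructor
  · rw [hvolK']
    calc ENNReal.ofReal |LinearMap.det L| * volume K
        ≤ 1 * volume K := by
          gcongr
          exact ENNReal.ofReal_le_one.mpr hdet_le
      _ = volume K := one_mul _
  · intro heq
    -- |det L| = 1
    have hKpos : 0 < volume K :=
      lt_of_lt_of_le (isOpen_interior.measure_pos volume hint) (measure_mono interior_subset)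
    have hKlt : volume K < ⊤ := hKc.measure_lt_top
    have habs : |LinearMap.det L| = 1 := by
      rw [hvolK'] at heq
      have h1 : ENNReal.ofReal |LinearMap.det L| * volume K = 1 * volume K := by
        rw [heq, one_mul]
      have h2 : ENNReal.ofReal |LinearMap.det L| ≤ 1 ∧ (1:ℝ≥0∞) ≤ ENNReal.ofReal |LinearMap.det L| :=
        ⟨(ENNReal.mul_le_mul_iff_left hKpos.ne' hKlt.ne).mp h1.le,
         (ENNReal.mul_le_mul_iff_left hKpos.ne' hKlt.ne).mp h1.ge⟩
      exact ENNReal.ofReal_eq_one.mp (le_antisymm h2.1 h2.2)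
    -- spectral setup
    have hn : Module.finrank ℝ (EuclideanSpace ℝ (Fin d)) = d := finrank_euclideanSpace_fin
    set G : EuclideanSpace ℝ (Fin d) →ₗ[ℝ] EuclideanSpace ℝ (Fin d) :=
      LinearMap.adjoint L * L with hGdef
    have hGsym : G.IsSymmetric := LinearMap.isSymmetric_adjoint_mul_self L
    set bb := hGsym.eigenvectorBasis hn with hbb
    set μ := hGsym.eigenvalues hn with hμdef
    have hGb : ∀ i, G (bb i) = μ i • bb i := fun i => hGsym.apply_eigenvectorBasis hn i
    have hrepr : ∀ (v : EuclideanSpace ℝ (Fin d)) i, bb.repr (G v) i = μ i * bb.repr v i :=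
      fun v i => hGsym.eigenvectorBasis_apply_self_apply hn v i
    have hGinner : ∀ v, ⟪G v, v⟫ = ‖L v‖^2 := by
      intro v
      rw [hGdef, Module.End.mul_apply, LinearMap.adjoint_inner_left, real_inner_self_eq_norm_sq]
    have hμpos : ∀ i, 0 < μ i := by
      intro i
      have h1 : ⟪G (bb i), bb i⟫ = μ i := by
        rw [hGb i, real_inner_smul_left, real_inner_self_eq_norm_sq, bb.orthonormal.1 i]
        ring
      have h2 : bb i ≠ 0 := by
        have := bb.toBasis.ne_zero i
        simpa using this
      have h3 : L (bb i) ≠ 0 := by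
        intro h
        exact h2 (T.map_eq_zero_iff.mp h)
      have h4 : 0 < ‖L (bb i)‖ := norm_pos_iff.mpr h3
      rw [← h1, hGinner]
      positivity
    have hdetG : LinearMap.det G = ∏ i, μ i := by
      rw [← LinearMap.det_toMatrix bb.toBasis]
      have hM : LinearMap.toMatrix bb.toBasis bb.toBasis G = Matrix.diagonal μ := by
        ext i j
        rw [LinearMap.toMatrix_apply]
        simp [hGb, Matrix.diagonal_apply, Finsupp.single_apply]
        split_ifs with h <;> simp [h]
      rw [hM, Matrix.det_diagonal]
    have hdetAdj : LinearMap.det (LinearMap.adjoint L) = LinearMap.det L := by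
      rw [← LinearMap.det_toMatrix bb.toBasis, ← LinearMap.det_toMatrix bb.toBasis L,
        LinearMap.toMatrix_adjoint bb bb L, Matrix.det_conjTranspose]
      simp
    have hprodμ : ∏ i, μ i = 1 := by
      rw [← hdetG, hGdef, map_mul, hdetAdj, ← sq, ← sq_abs, habs, one_pow]
    -- center of the new ellipsoid
    set w : EuclideanSpace ℝ (Fin d) := LinearMap.adjoint L a with hwdef
    set x0 : EuclideanSpace ℝ (Fin d) :=
      bb.repr.symm (WithLp.toLp 2 (fun i => -(bb.repr w i) / (1 + μ i))) with hx0def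
    have h1μ : ∀ i, (1 : ℝ) + μ i ≠ 0 := fun i => by nlinarith [hμpos i]
    have hx0 : x0 + G x0 + w = 0 := by
      apply bb.repr.injective
      ext i
      have hx0i : bb.repr x0 i = -(bb.repr w i) / (1 + μ i) := by
        rw [hx0def, LinearIsometryEquiv.apply_symm_apply]
      simp only [map_add, map_zero]
      show bb.repr x0 i + bb.repr (G x0) i + bb.repr w i = (0 : EuclideanSpace ℝ (Fin d)) i
      rw [hrepr, hx0i]
      have := h1μ i
      rw [WithLp.ofLp_zero, Pi.zero_apply]
      field_simp
      ring
    -- quadratic identity (completing the square)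
    have hquad : ∀ x : EuclideanSpace ℝ (Fin d),
        ‖x - x0‖^2 + ‖L (x - x0)‖^2 + (‖x0‖^2 + ‖a + L x0‖^2) = ‖x‖^2 + ‖a + L x‖^2 := by
      intro x
      set h := x - x0 with hh
      have hx : x = x0 + h := by rw [hh]; abel
      have e1 : ‖x0 + h‖^2 = ‖x0‖^2 + 2*⟪x0, h⟫ + ‖h‖^2 := norm_add_sq_real _ _
      have e2 : a + L (x0 + h) = (a + L x0) + L h := by rw [map_add]; abel
      have e3 : ‖(a + L x0) + L h‖^2 = ‖a + L x0‖^2 + 2*⟪a + L x0, L h⟫ + ‖L h‖^2 :=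
        norm_add_sq_real _ _
      have e4 : ⟪a + L x0, L h⟫ = ⟪w + G x0, h⟫ := by
        rw [← LinearMap.adjoint_inner_left]
        congr 1
        rw [map_add, hwdef, hGdef, Module.End.mul_apply]
      have e5 : ⟪x0, h⟫ + ⟪w + G x0, h⟫ = 0 := by
        rw [← inner_add_left]
        have hz : x0 + (w + G x0) = 0 := by
          rw [← hx0]; abel
        rw [hz, inner_zero_left]
      rw [hx, e1, e2, e3]
      nlinarith [e4, e5]
    -- membership bound
    have hKbound : ∀ x ∈ K, ‖x - x0‖^2 + ‖L (x - x0)‖^2 ≤ 2 := by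
      intro x hx
      have h1 : ‖x‖ ≤ 1 := by
        have := hKB hx; rwa [mem_closedBall, dist_zero_right] at this
      have h2 : ‖a + L x‖ ≤ 1 := by
        have := hK' ⟨x, hx, rfl⟩
        rwa [mem_closedBall, dist_zero_right] at this
      have h3 := hquad x
      nlinarith [norm_nonneg x, norm_nonneg (a + L x), sq_nonneg (‖x0‖), sq_nonneg (‖a + L x0‖),
        norm_nonneg x0, norm_nonneg (a + L x0)]
    -- the smaller ellipsoid map
    set sc : Fin d → ℝ := fun i => Real.sqrt (2 / (1 + μ i)) with hscdef
    have hscpos : ∀ i, 0 < sc i := fun i =>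
      Real.sqrt_pos.mpr (by have := hμpos i; positivity)
    have hscsq : ∀ i, sc i ^ 2 = 2 / (1 + μ i) := fun i =>
      Real.sq_sqrt (le_of_lt (by have := hμpos i; positivity))
    set Sd : EuclideanSpace ℝ (Fin d) ≃ₗ[ℝ] EuclideanSpace ℝ (Fin d) :=
      ((bb.repr.toLinearEquiv).trans (diagEquiv sc (fun i => (hscpos i).ne'))).trans
        bb.repr.symm.toLinearEquiv with hSddef
    have hSdet : LinearMap.det Sd.toLinearMap = ∏ i, sc i := by
      have hcomp : Sd.toLinearMap =
          (bb.repr.symm.toLinearEquiv : EuclideanSpace ℝ (Fin d) →ₗ[ℝ] EuclideanSpace ℝ (Fin d))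
            ∘ₗ (diagEquiv sc (fun i => (hscpos i).ne')).toLinearMap
            ∘ₗ (bb.repr.symm.toLinearEquiv.symm :
              EuclideanSpace ℝ (Fin d) →ₗ[ℝ] EuclideanSpace ℝ (Fin d)) := by
        rw [LinearIsometryEquiv.toLinearEquiv_symm]
        rfl
      rw [hcomp, LinearMap.det_conj, diagEquiv_det]
    -- norm computations
    have hEucSq : ∀ y : EuclideanSpace ℝ (Fin d), ‖y‖^2 = ∑ i, (y i)^2 := by
      intro y
      rw [EuclideanSpace.norm_eq, Real.sq_sqrt (by positivity)]
      exact Finset.sum_congr rfl fun i _ => by rw [Real.norm_eq_abs, sq_abs]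
    have hrepr_sq : ∀ u : EuclideanSpace ℝ (Fin d), ‖u‖^2 = ∑ i, (bb.repr u i)^2 := by
      intro u
      rw [← bb.repr.norm_map u, hEucSq]
    have hLsq : ∀ u : EuclideanSpace ℝ (Fin d), ‖L u‖^2 = ∑ i, μ i * (bb.repr u i)^2 := by
      intro u
      rw [← hGinner u, ← bb.repr.inner_map_map (G u) u, PiLp.inner_apply]
      refine Finset.sum_congr rfl fun i _ => ?_
      simp only [RCLike.inner_apply, conj_trivial, hrepr u i]
      ring
    -- the subset claim
    have hsub2 : K ⊆ (fun x => x0 + Sd x) '' closedBall (0 : EuclideanSpace ℝ (Fin d)) 1 := by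
      intro x hx
      refine ⟨Sd.symm (x - x0), ?_, by simp⟩
      rw [mem_closedBall, dist_zero_right]
      have hval : Sd.symm (x - x0) = bb.repr.symm (WithLp.toLp 2 (fun i => bb.repr (x - x0) i / sc i)) := rfl
      have hcalc : ‖Sd.symm (x - x0)‖^2 ≤ 1 := by
        rw [hval, LinearIsometryEquiv.norm_map, hEucSq]
        have hterm : ∀ i : Fin d,
            ((fun i => bb.repr (x - x0) i / sc i) i)^2 = (1 + μ i)/2 * (bb.repr (x - x0) i)^2 := by
          intro i
          have h1 := h1μ i
          rw [div_pow, hscsq i]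
          field_simp
          try ring
        rw [Finset.sum_congr rfl fun i _ => hterm i]
        have hsum : ∑ i, (1 + μ i)/2 * (bb.repr (x - x0) i)^2
            = (‖x - x0‖^2 + ‖L (x - x0)‖^2)/2 := by
          rw [hrepr_sq, hLsq, ← Finset.sum_add_distrib, Finset.sum_div]
          exact Finset.sum_congr rfl fun i _ => by ring
        rw [hsum]
        linarith [hKbound x hx]
      nlinarith [norm_nonneg (Sd.symm (x - x0)), hcalc]
    -- conclude all eigenvalues are 1
    have hprod_ge : 1 ≤ ∏ i, sc i := by
      have hk := key x0 Sd hsub2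
      rwa [hSdet, abs_of_pos (Finset.prod_pos fun i _ => hscpos i)] at hk
    have hprod2 : 1 ≤ ∏ i, (2 / (1 + μ i)) := by
      calc (1:ℝ) = 1^2 := by ring
        _ ≤ (∏ i, sc i)^2 := by nlinarith [hprod_ge]
        _ = ∏ i, sc i^2 := by rw [← Finset.prod_pow]
        _ = ∏ i, 2/(1+μ i) := Finset.prod_congr rfl fun i _ => hscsq i
    have hprodle : ∏ i, ((1 + μ i)/2) ≤ 1 := by
      have hmul : (∏ i, ((1+μ i)/2)) * (∏ i, (2/(1+μ i))) = 1 := by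
        rw [← Finset.prod_mul_distrib]
        rw [Finset.prod_congr rfl fun i _ => show (1+μ i)/2 * (2/(1+μ i)) = 1 by
          have := h1μ i; field_simp]
        exact Finset.prod_const_one
      have hpos : 0 < ∏ i, ((1+μ i)/2) :=
        Finset.prod_pos fun i _ => by nlinarith [hμpos i]
      nlinarith [mul_le_mul_of_nonneg_left hprod2 hpos.le]
    have hsqrtμ : ∏ i, Real.sqrt (μ i) = 1 := by
      have h1 : (∏ i, Real.sqrt (μ i))^2 = 1 := by
        rw [← Finset.prod_pow,
          Finset.prod_congr rfl fun i _ => Real.sq_sqrt (hμpos i).le]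
        exact hprodμ
      have h2 : 0 ≤ ∏ i, Real.sqrt (μ i) := Finset.prod_nonneg fun i _ => Real.sqrt_nonneg _
      nlinarith
    have hAM : ∀ i, Real.sqrt (μ i) ≤ (1 + μ i)/2 := by
      intro i
      nlinarith [Real.sq_sqrt (hμpos i).le, Real.sqrt_nonneg (μ i),
        sq_nonneg (Real.sqrt (μ i) - 1)]
    have hμ1 : ∀ i, μ i = 1 := by
      intro i
      by_contra hne
      have hlt : Real.sqrt (μ i) < (1 + μ i)/2 := by
        rcases lt_or_eq_of_le (hAM i) with hcase | hcase
        · exact hcase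
        · exfalso
          apply hne
          have hs := Real.sq_sqrt (hμpos i).le
          have ht0 : (Real.sqrt (μ i) - 1)^2 = 0 := by nlinarith
          have ht : Real.sqrt (μ i) - 1 = 0 := by
            exact pow_eq_zero_iff two_ne_zero |>.mp ht0
          have ht1 : Real.sqrt (μ i) = 1 := by linarith
          calc μ i = Real.sqrt (μ i)^2 := hs.symm
            _ = 1 := by rw [ht1]; ring
      have hstrict := Finset.prod_lt_prod (s := Finset.univ)
        (f := fun j => Real.sqrt (μ j)) (g := fun j => (1 + μ j)/2)
        (fun j _ => Real.sqrt_pos.mpr (hμpos j)) (fun j _ => hAM j)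
        ⟨i, Finset.mem_univ i, hlt⟩
      rw [hsqrtμ] at hstrict
      linarith [hprodle]
    -- G is the identity, hence T is an isometry
    have hGid : G = LinearMap.id := by
      apply bb.toBasis.ext
      intro i
      rw [OrthonormalBasis.coe_toBasis, hGb i, hμ1 i, one_smul, LinearMap.id_apply]
    have hnorm : ∀ x : EuclideanSpace ℝ (Fin d), ‖L x‖ = ‖x‖ := by
      intro x
      have h1 : ‖L x‖^2 = ‖x‖^2 := by
        rw [← hGinner x, hGid, LinearMap.id_apply, real_inner_self_eq_norm_sq]
      exact (sq_eq_sq₀ (norm_nonneg _) (norm_nonneg _)).mp h1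
    refine Isometry.of_dist_eq fun x y => ?_
    show dist (a + T x) (a + T y) = dist x y
    rw [dist_eq_norm, dist_eq_norm]
    have hxy : (a + T x) - (a + T y) = L (x - y) := by
      simp only [hL, LinearEquiv.coe_coe, map_sub]
      abel
    rw [hxy, hnorm]
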